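/- Let ṡ : ℤ → ℝ satisfy the fan condition: for some C > 0, |ṡ(m) + Σ_{i=1}^{k} ((k−i)/k)[ṡ(m+i)+ṡ(m−i)]| ≤ C for all m ∈ ℤ, k ≥ 1. Then Σ_{i=k}^{k+n} ṡ(i) = o(n) as n → ∞, for each fixed k ∈ ℤ. -/

import Mathlib

open Filter Finset

private lemma sum_range_center (s : ℤ → ℝ) (t : ℕ) :
    ∀ m : ℤ, ∑ i ∈ Finset.range (2*t+1), s (m + i)
      = s (m + t) + ∑ i ∈ Finset.Icc 1 t, (s (m + t + i) + s (m + t - i)) := by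
  induction t with
  | zero => intro m; simp
  | succ t ih =>
    intro m
    have e1 : 2*(t+1)+1 = (2*t+1) + 1 + 1 := by ring
    rw [e1, Finset.sum_range_succ, Finset.sum_range_succ']
    have e2 : ∀ i ∈ Finset.range (2*t+1), s (m + ↑(i+1)) = s ((m+1) + i) := by
      intro i _; congr 1; push_cast; ring
    rw [Finset.sum_congr rfl e2, ih (m+1),
      Finset.sum_Icc_succ_top (Nat.one_le_iff_ne_zero.mpr (Nat.succ_ne_zero t))]
    have a1 : m + 1 + (t:ℤ) = m + ((t:ℕ)+1 : ℕ) := by push_cast; ring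
    have a2 : m + ((2*t+2 : ℕ):ℤ) = m + ((t+1:ℕ):ℤ) + ((t+1:ℕ):ℤ) := by push_cast; ring
    have a3 : m + (0:ℕ) = m + ((t+1:ℕ):ℤ) - ((t+1:ℕ):ℤ) := by push_cast; ring
    have a4 : ∀ i ∈ Finset.Icc 1 t,
        (s (m + 1 + t + i) + s (m + 1 + t - i)) = (s (m + ((t+1:ℕ):ℤ) + i) + s (m + ((t+1:ℕ):ℤ) - i)) := by
      intro i _
      have : m + 1 + (t:ℤ) = m + ((t+1:ℕ):ℤ) := by push_cast; ring
      rw [this]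
    rw [Finset.sum_congr rfl a4, a1, a2, a3]
    push_cast
    ring

private lemma W_diff (s : ℤ → ℝ) (m : ℤ) (k l : ℕ) :
    (((k+l : ℕ) : ℝ) * s m + ∑ i ∈ Finset.Icc 1 (k+l), (((k+l : ℕ) : ℝ) - i) * (s (m+i) + s (m-i)))
      - ((k : ℝ) * s m + ∑ i ∈ Finset.Icc 1 k, ((k : ℝ) - i) * (s (m+i) + s (m-i)))
    = (l : ℝ) * (s m + ∑ i ∈ Finset.Icc 1 k, (s (m+i) + s (m-i)))
      + ∑ i ∈ Finset.Icc (k+1) (k+l), (((k+l : ℕ) : ℝ) - i) * (s (m+i) + s (m-i)) := by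
  have h1 : Finset.Icc 1 (k+l) = Finset.Ioc 0 (k+l) := by rw [← Finset.Icc_add_one_left_eq_Ioc]; rfl
  have h2 : Finset.Icc 1 k = Finset.Ioc 0 k := by rw [← Finset.Icc_add_one_left_eq_Ioc]; rfl
  have h3 : Finset.Icc (k+1) (k+l) = Finset.Ioc k (k+l) := by rw [← Finset.Icc_add_one_left_eq_Ioc]
  rw [h1, h2, h3,
    ← Finset.sum_Ioc_consecutive (fun i : ℕ => (((k+l : ℕ) : ℝ) - i) * (s (m+i) + s (m-i)))
      (Nat.zero_le k) (Nat.le_add_right k l)]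
  have h4 : ∑ i ∈ Finset.Ioc 0 k, (((k+l : ℕ) : ℝ) - i) * (s (m+i) + s (m-i))
      = ∑ i ∈ Finset.Ioc 0 k, (((k : ℝ) - i) * (s (m+i) + s (m-i)) + (l:ℝ) * (s (m+i) + s (m-i))) := by
    refine Finset.sum_congr rfl fun i _ => ?_
    push_cast; ring
  rw [h4, Finset.sum_add_distrib, ← Finset.mul_sum]
  push_cast
  ring

theorem fan_condition_partial_sums_littleo
    (C : ℝ) (hC : 0 < C) (s : ℤ → ℝ)
    (hfan : ∀ m : ℤ, ∀ k : ℕ, 1 ≤ k →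
      |s m + ∑ i ∈ Finset.Icc 1 k, ((k : ℝ) - i) / k * (s (m + i) + s (m - i))| ≤ C)
    (k : ℤ) :
    Tendsto (fun n : ℕ => (∑ i ∈ Finset.range (n + 1), s (k + i)) / n)
      atTop (nhds 0) := by
  have hs : ∀ m : ℤ, |s m| ≤ C := by
    intro m
    simpa using hfan m 1 le_rfl
  -- triangle sums are bounded by K * C
  have hW : ∀ (m : ℤ) (K : ℕ),
      |(K:ℝ) * s m + ∑ i ∈ Finset.Icc 1 K, ((K:ℝ) - i) * (s (m+i) + s (m-i))| ≤ K * C := by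
    intro m K
    rcases Nat.eq_zero_or_pos K with h | h
    · subst h; simp
    · have hK0 : (0:ℝ) < (K:ℝ) := by exact_mod_cast h
      have heq : (K:ℝ) * s m + ∑ i ∈ Finset.Icc 1 K, ((K:ℝ) - i) * (s (m+i) + s (m-i))
          = (K:ℝ) * (s m + ∑ i ∈ Finset.Icc 1 K, ((K:ℝ) - i) / K * (s (m+i) + s (m-i))) := by
        rw [mul_add, Finset.mul_sum]
        refine congrArg _ (Finset.sum_congr rfl fun i _ => ?_)
        field_simp
      rw [heq, abs_mul, abs_of_pos hK0]
      exact mul_le_mul_of_nonneg_left (hfan m K h) hK0.le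
  -- box sums are bounded by (4 √K + 5) C
  have hB : ∀ (m : ℤ) (K : ℕ),
      |s m + ∑ i ∈ Finset.Icc 1 K, (s (m+i) + s (m-i))| ≤ (4 * Nat.sqrt K + 5) * C := by
    intro m K
    obtain ⟨l, hl⟩ : ∃ l : ℕ, l = Nat.sqrt K + 1 := ⟨_, rfl⟩
    have hl0 : (0:ℝ) < (l:ℝ) := by rw [hl]; positivity
    have hKl : (K:ℝ) < (l:ℝ) * (l:ℝ) := by
      rw [hl]; exact_mod_cast Nat.lt_succ_sqrt K
    have hcast : ((K + l : ℕ) : ℝ) = (K:ℝ) + (l:ℝ) := by push_cast; ring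
    have hid := W_diff s m K l
    -- bound the ramp term
    have hR : |∑ i ∈ Finset.Icc (K+1) (K+l), (((K+l : ℕ) : ℝ) - i) * (s (m+i) + s (m-i))|
        ≤ (l:ℝ) * ((l:ℝ) * (2*C)) := by
      calc |∑ i ∈ Finset.Icc (K+1) (K+l), (((K+l : ℕ) : ℝ) - i) * (s (m+i) + s (m-i))|
          ≤ ∑ i ∈ Finset.Icc (K+1) (K+l), |(((K+l : ℕ) : ℝ) - i) * (s (m+i) + s (m-i))| :=
            Finset.abs_sum_le_sum_abs _ _
        _ ≤ ∑ _i ∈ Finset.Icc (K+1) (K+l), (l:ℝ) * (2*C) := by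
            refine Finset.sum_le_sum fun i hi => ?_
            rw [abs_mul]
            have hi1 : K + 1 ≤ i := (Finset.mem_Icc.mp hi).1
            have hi2 : i ≤ K + l := (Finset.mem_Icc.mp hi).2
            have hi1' : (K:ℝ) + 1 ≤ (i:ℝ) := by exact_mod_cast hi1
            have hi2' : (i:ℝ) ≤ (K:ℝ) + (l:ℝ) := by rw [← hcast]; exact_mod_cast hi2
            have h1 : |(((K+l : ℕ) : ℝ) - i)| ≤ (l:ℝ) := by
              rw [hcast, abs_le]; constructor <;> linarith
            have h2 : |s (m+i) + s (m-i)| ≤ 2*C := by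
              calc |s (m+i) + s (m-i)| ≤ |s (m+i)| + |s (m-i)| := abs_add_le _ _
                _ ≤ 2*C := by linarith [hs (m+i), hs (m-i)]
            exact mul_le_mul h1 h2 (abs_nonneg _) hl0.le
        _ = (l:ℝ) * ((l:ℝ) * (2*C)) := by
            rw [Finset.sum_const, Nat.card_Icc]
            have : K + l + 1 - (K + 1) = l := by omega
            rw [this, nsmul_eq_mul]
    have hW1 := hW m (K + l)
    have hW2 := hW m K
    have heq2 : (l:ℝ) * (s m + ∑ i ∈ Finset.Icc 1 K, (s (m+i) + s (m-i)))
        = ((((K+l : ℕ) : ℝ) * s m + ∑ i ∈ Finset.Icc 1 (K+l), (((K+l : ℕ) : ℝ) - i) * (s (m+i) + s (m-i)))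
          - ((K : ℝ) * s m + ∑ i ∈ Finset.Icc 1 K, ((K : ℝ) - i) * (s (m+i) + s (m-i))))
          - ∑ i ∈ Finset.Icc (K+1) (K+l), (((K+l : ℕ) : ℝ) - i) * (s (m+i) + s (m-i)) := by
      rw [hid]; ring
    have key : |(l:ℝ) * (s m + ∑ i ∈ Finset.Icc 1 K, (s (m+i) + s (m-i)))|
        ≤ ((K+l : ℕ) : ℝ) * C + (K:ℝ) * C + (l:ℝ) * ((l:ℝ) * (2*C)) := by
      rw [heq2]
      have t1 := abs_sub
        ((((K+l : ℕ) : ℝ) * s m + ∑ i ∈ Finset.Icc 1 (K+l), (((K+l : ℕ) : ℝ) - i) * (s (m+i) + s (m-i)))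
          - ((K : ℝ) * s m + ∑ i ∈ Finset.Icc 1 K, ((K : ℝ) - i) * (s (m+i) + s (m-i))))
        (∑ i ∈ Finset.Icc (K+1) (K+l), (((K+l : ℕ) : ℝ) - i) * (s (m+i) + s (m-i)))
      have t2 := abs_sub
        (((K+l : ℕ) : ℝ) * s m + ∑ i ∈ Finset.Icc 1 (K+l), (((K+l : ℕ) : ℝ) - i) * (s (m+i) + s (m-i)))
        ((K : ℝ) * s m + ∑ i ∈ Finset.Icc 1 K, ((K : ℝ) - i) * (s (m+i) + s (m-i)))
      linarith
    rw [abs_mul, abs_of_pos hl0] at key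
    have hfin : ((K+l : ℕ) : ℝ) * C + (K:ℝ) * C + (l:ℝ) * ((l:ℝ) * (2*C))
        ≤ (l:ℝ) * ((4 * (l:ℝ) + 1) * C) := by
      rw [hcast]
      nlinarith
    have h4 : |s m + ∑ i ∈ Finset.Icc 1 K, (s (m+i) + s (m-i))| ≤ (4 * (l:ℝ) + 1) * C :=
      le_of_mul_le_mul_left (le_trans key hfin) hl0
    have hfin2 : (4 * (l:ℝ) + 1) * C = (4 * Nat.sqrt K + 5) * C := by
      rw [hl]; push_cast; ring
    linarith [hfin2.ge]
  -- bound on partial sums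
  have hS : ∀ n : ℕ, |∑ i ∈ Finset.range (n+1), s (k + i)| ≤ (4 * Nat.sqrt n + 6) * C := by
    intro n
    rcases Nat.even_or_odd n with ⟨t, ht⟩ | ⟨t, ht⟩
    · have hn1 : n + 1 = 2*t + 1 := by omega
      have htn : (Nat.sqrt t : ℝ) ≤ (Nat.sqrt n : ℝ) := by
        exact_mod_cast Nat.sqrt_le_sqrt (by omega : t ≤ n)
      rw [hn1, sum_range_center s t k]
      calc |s (k + t) + ∑ i ∈ Finset.Icc 1 t, (s (k + t + i) + s (k + t - i))|
          ≤ (4 * Nat.sqrt t + 5) * C := hB (k + t) t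
        _ ≤ (4 * Nat.sqrt n + 6) * C := by nlinarith
    · have hn1 : n + 1 = (2*t + 1) + 1 := by omega
      have htn : (Nat.sqrt t : ℝ) ≤ (Nat.sqrt n : ℝ) := by
        exact_mod_cast Nat.sqrt_le_sqrt (by omega : t ≤ n)
      rw [hn1, Finset.sum_range_succ, sum_range_center s t k]
      calc |s (k + t) + ∑ i ∈ Finset.Icc 1 t, (s (k + t + i) + s (k + t - i)) + s (k + ↑(2*t+1))|
          ≤ |s (k + t) + ∑ i ∈ Finset.Icc 1 t, (s (k + t + i) + s (k + t - i))| + |s (k + ↑(2*t+1))| :=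
            abs_add_le _ _
        _ ≤ (4 * Nat.sqrt t + 5) * C + C := add_le_add (hB (k + t) t) (hs _)
        _ ≤ (4 * Nat.sqrt n + 6) * C := by nlinarith
  -- squeeze
  have hsqT : Tendsto Real.sqrt atTop atTop := by
    apply Filter.tendsto_atTop_atTop.mpr
    intro b
    refine ⟨max (b*b) 0, fun x hx => ?_⟩
    have h1 : b*b ≤ x := le_trans (le_max_left _ _) hx
    calc b ≤ |b| := le_abs_self b
      _ = Real.sqrt (b*b) := (Real.sqrt_mul_self_eq_abs b).symm
      _ ≤ Real.sqrt x := Real.sqrt_le_sqrt h1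
  have l1 : Tendsto (fun n : ℕ => (Real.sqrt n)⁻¹) atTop (nhds 0) :=
    tendsto_inv_atTop_zero.comp (hsqT.comp tendsto_natCast_atTop_atTop)
  have l2 : Tendsto (fun n : ℕ => ((n:ℝ))⁻¹) atTop (nhds 0) :=
    tendsto_inv_atTop_nhds_zero_nat
  have hg : Tendsto (fun n : ℕ => 4*C*(Real.sqrt n)⁻¹ + 6*C*((n:ℝ))⁻¹) atTop (nhds 0) := by
    have := (l1.const_mul (4*C)).add (l2.const_mul (6*C))
    simpa using this
  refine squeeze_zero_norm (fun n => ?_) hg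
  rcases Nat.eq_zero_or_pos n with h | h
  · subst h; simp
  · have hn0 : (0:ℝ) < (n:ℝ) := by exact_mod_cast h
    have hsn : (0:ℝ) < Real.sqrt n := Real.sqrt_pos.mpr hn0
    have hss : Real.sqrt n * Real.sqrt n = (n:ℝ) := Real.mul_self_sqrt hn0.le
    have h1 : (Nat.sqrt n : ℝ) ≤ Real.sqrt n := Real.nat_sqrt_le_real_sqrt
    have hinv : Real.sqrt n / (n:ℝ) = (Real.sqrt n)⁻¹ := Real.sqrt_div_self
    have h5 : ((Nat.sqrt n : ℝ))/(n:ℝ) ≤ (Real.sqrt n)⁻¹ := by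
      rw [← hinv]; gcongr
    calc ‖(∑ i ∈ Finset.range (n + 1), s (k + i)) / n‖
        = |∑ i ∈ Finset.range (n + 1), s (k + i)| / (n:ℝ) := by
          rw [Real.norm_eq_abs, abs_div, abs_of_pos hn0]
      _ ≤ ((4 * Nat.sqrt n + 6) * C) / (n:ℝ) := by gcongr; exact hS n
      _ = 4*C*((Nat.sqrt n : ℝ)/(n:ℝ)) + 6*C*((n:ℝ))⁻¹ := by ring
      _ ≤ 4*C*(Real.sqrt n)⁻¹ + 6*C*((n:ℝ))⁻¹ := by gcongr
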